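/- Let S be a semigroup satisfying left-sided unique reversibility (right cancellation: x*a = y*a implies x = y) and right-sided unlimited reversibility (for all a, b, the equation a*X = b has at least two distinct solutions X). Then S is infinite. -/
import Mathlib

/-- A semigroup with right cancellation in which every equation a*X = b has at
least two distinct solutions is infinite. -/
theorem stmt_18 (S : Type*) [Semigroup S] [Nonempty S]
    (hrc : ∀ a x y : S, x * a = y * a → x = y)
    (hsolv : ∀ a b : S, ∃ X₁ X₂ : S, X₁ ≠ X₂ ∧ a * X₁ = b ∧ a * X₂ = b) :
    Infinite S := by
  by_contra h
  have : Finite S := not_infinite_iff_finite.mp h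
  have a : S := Classical.arbitrary S
  have hsurj : Function.Surjective (fun x : S => a * x) := by
    intro b
    obtain ⟨X₁, _, _, h1, _⟩ := hsolv a b
    exact ⟨X₁, h1⟩
  have hinj : Function.Injective (fun x : S => a * x) :=
    Finite.injective_iff_surjective.mpr hsurj
  obtain ⟨X₁, X₂, hne, h1, h2⟩ := hsolv a a
  exact hne (hinj (h1.trans h2.symm))
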